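/- Let (S, I) be a traveling wave profile with speed c > 0 such that 0 ≤ S(ξ) ≤ S₀ and I(ξ) ≥ 0 for all ξ ∈ ℝ, and such that I(ξ) > 0 for all sufficiently negative ξ. Then 0 < S(ξ) < S₀ and I(ξ) > 0 for all ξ ∈ ℝ. -/

import Mathlib

open Real Filter

/-- **Strict positivity of traveling wave profiles** (Step 2 of the proof of
Theorem 3.1).  Let `(S, I)` be a traveling wave profile with speed `c > 0` such that
`0 ≤ S(ξ) ≤ S₀` and `I(ξ) ≥ 0` for all `ξ`, and `I(ξ) > 0` for all sufficiently
negative `ξ`.  Then `0 < S(ξ) < S₀` and `I(ξ) > 0` for all `ξ ∈ ℝ`. -/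
theorem traveling_wave_strict_bounds
    (d₁ d₂ Λ β μ₁ μ₂ : ℝ) (hd₁ : 0 < d₁) (hd₂ : 0 < d₂) (hΛ : 0 < Λ)
    (hβ : 0 < β) (hμ₁ : 0 < μ₁) (hμ₂ : 0 < μ₂)
    (f : ℝ → ℝ) (hf0 : f 0 = 0) (hfC1 : ContDiff ℝ 1 f)
    (hf' : ∀ I : ℝ, 0 ≤ I → 0 < deriv f I)
    (hfratio : ∀ I J : ℝ, 0 < I → I ≤ J → f J / J ≤ f I / I)
    (c : ℝ) (hc : 0 < c)
    (S I : ℝ → ℝ) (hS : ContDiff ℝ 1 S) (hI : ContDiff ℝ 1 I)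
    (hSeq : ∀ ξ : ℝ, c * deriv S ξ =
      d₁ * (S (ξ + 1) + S (ξ - 1) - 2 * S ξ) + Λ - μ₁ * S ξ - β * S ξ * f (I ξ))
    (hIeq : ∀ ξ : ℝ, c * deriv I ξ =
      d₂ * (I (ξ + 1) + I (ξ - 1) - 2 * I ξ) + β * S ξ * f (I ξ) - μ₂ * I ξ)
    (hSbd : ∀ ξ : ℝ, 0 ≤ S ξ ∧ S ξ ≤ Λ / μ₁) (hInonneg : ∀ ξ : ℝ, 0 ≤ I ξ)
    (hIneg : ∃ ξ₀ : ℝ, ∀ ξ : ℝ, ξ ≤ ξ₀ → 0 < I ξ) :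
    ∀ ξ : ℝ, 0 < S ξ ∧ S ξ < Λ / μ₁ ∧ 0 < I ξ := by
  obtain ⟨ξ₀, hξ₀⟩ := hIneg
  -- f is positive on positive reals
  have hmono : StrictMonoOn f (Set.Ici (0 : ℝ)) := by
    apply strictMonoOn_of_deriv_pos (convex_Ici 0) hfC1.continuous.continuousOn
    intro x hx
    rw [interior_Ici] at hx
    exact hf' x hx.le
  have hfpos : ∀ x : ℝ, 0 < x → 0 < f x := by
    intro x hx
    have := hmono (Set.self_mem_Ici) (Set.mem_Ici.2 hx.le) hx
    rwa [hf0] at this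
  have hfnn : ∀ x : ℝ, 0 ≤ x → 0 ≤ f x := by
    intro x hx
    rcases hx.lt_or_eq with h | h
    · exact (hfpos x h).le
    · rw [← h, hf0]
  -- if I vanishes at η, it vanishes at η - 1
  have hstep : ∀ η : ℝ, I η = 0 → I (η - 1) = 0 := by
    intro η hη
    have hmin : IsLocalMin I η :=
      Filter.Eventually.of_forall fun x => by rw [hη]; exact hInonneg x
    have hd : deriv I η = 0 := hmin.deriv_eq_zero
    have heq := hIeq η
    rw [hd, hη, hf0] at heq
    have h1 := hInonneg (η + 1)
    have h2 := hInonneg (η - 1)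
    nlinarith [heq]
  -- I is positive everywhere
  have hIpos : ∀ ξ : ℝ, 0 < I ξ := by
    intro ξ
    by_contra h
    have hz : I ξ = 0 := le_antisymm (not_lt.1 h) (hInonneg ξ)
    have hiter : ∀ n : ℕ, I (ξ - n) = 0 := by
      intro n
      induction n with
      | zero => simpa using hz
      | succ k ih =>
        have := hstep (ξ - k) ih
        have : I (ξ - k - 1) = 0 := this
        convert this using 2
        push_cast
        ring
    obtain ⟨n, hn⟩ := exists_nat_ge (ξ - ξ₀)
    have hle : ξ - (n : ℝ) ≤ ξ₀ := by linarith
    have := hξ₀ _ hle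
    rw [hiter n] at this
    exact lt_irrefl 0 this
  intro ξ
  refine ⟨?_, ?_, hIpos ξ⟩
  -- S is positive
  · by_contra h
    have hz : S ξ = 0 := le_antisymm (not_lt.1 h) (hSbd ξ).1
    have hmin : IsLocalMin S ξ :=
      Filter.Eventually.of_forall fun x => by rw [hz]; exact (hSbd x).1
    have hd : deriv S ξ = 0 := hmin.deriv_eq_zero
    have heq := hSeq ξ
    rw [hd, hz] at heq
    have h1 := (hSbd (ξ + 1)).1
    have h2 := (hSbd (ξ - 1)).1
    nlinarith [heq]
  -- S < S₀
  · by_contra h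
    have hz : S ξ = Λ / μ₁ := le_antisymm (hSbd ξ).2 (not_lt.1 h)
    have hmax : IsLocalMax S ξ :=
      Filter.Eventually.of_forall fun x => by rw [hz]; exact (hSbd x).2
    have hd : deriv S ξ = 0 := hmax.deriv_eq_zero
    have heq := hSeq ξ
    rw [hd, hz] at heq
    have h1 := (hSbd (ξ + 1)).2
    have h2 := (hSbd (ξ - 1)).2
    have hfp : 0 < f (I ξ) := hfpos _ (hIpos ξ)
    have hS0 : 0 < Λ / μ₁ := div_pos hΛ hμ₁
    have hcancel : Λ - μ₁ * (Λ / μ₁) = 0 := by field_simp; ring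
    nlinarith [heq, mul_pos (mul_pos hβ hS0) hfp]
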